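/- Let D be a set with |D| = 4 and let m ≥ 1, and write A = (4^{m+1} − 4)/3 and B = 2^{m+1} − 2. Then the number of m-endomorphisms on D⁺, up to combinatorial equivalence, equals (1/24)·( A⁴ + 6·B²·A + 3·A² + 8m·A + 6·A ). -/

import Mathlib

open FreeSemigroup MulAction Equiv Finset Pointwise

namespace MEndoProof

variable {D E F : Type*} {m : ℕ}

lemma fs_map_mk (f : D → E) (t : List D) : ∀ h, FreeSemigroup.map f ⟨h, t⟩ = ⟨f h, t.map f⟩ := by
  induction t with
  | nil => intro h; rfl
  | cons a t ih =>
    intro h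
    have h1 : (⟨h, a :: t⟩ : FreeSemigroup D) = ⟨h, []⟩ * ⟨a, t⟩ := rfl
    rw [h1, map_mul]
    show FreeSemigroup.map f (of h) * _ = _
    rw [map_of, ih a]
    rfl

lemma fs_map_map (f : D → E) (g : E → F) (x : FreeSemigroup D) :
    FreeSemigroup.map g (FreeSemigroup.map f x) = FreeSemigroup.map (g ∘ f) x := by
  obtain ⟨h, t⟩ := x
  simp [fs_map_mk, Function.comp]

lemma fs_map_id (x : FreeSemigroup D) : FreeSemigroup.map (id : D → D) x = x := by
  obtain ⟨h, t⟩ := x; simp [fs_map_mk]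

abbrev WB (D : Type*) (m : ℕ) := {w : FreeSemigroup D // w.length ≤ m}

def wmap (m : ℕ) (f : D → E) (w : WB D m) : WB E m :=
  ⟨FreeSemigroup.map f w.1, by rw [length_map]; exact w.2⟩

lemma wmap_wmap (f : D → E) (g : E → F) (w : WB D m) :
    wmap m g (wmap m f w) = wmap m (g ∘ f) w := Subtype.ext (fs_map_map f g w.1)

lemma wmap_id (w : WB D m) : wmap m (id : D → D) w = w := Subtype.ext (fs_map_id w.1)

lemma wmap_invol {σ : D → D} (hσ : σ ∘ σ = id) (w : WB D m) :
    wmap m σ (wmap m σ w) = w := by rw [wmap_wmap, hσ, wmap_id]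

/-! ### counting words -/

def wEquiv (D : Type*) (m : ℕ) : WB D m ≃ Σ ℓ : Fin m, D × List.Vector D ℓ.1 where
  toFun w := ⟨⟨w.1.tail.length, by have := w.2; unfold FreeSemigroup.length at this; omega⟩,
    (w.1.head, ⟨w.1.tail, rfl⟩)⟩
  invFun x := ⟨⟨x.2.1, x.2.2.1⟩, by
    have h1 := x.2.2.2
    have h2 := x.1.2
    show x.2.2.1.length + 1 ≤ m
    omega⟩
  left_inv w := rfl
  right_inv := by
    rintro ⟨⟨ℓ, hℓ⟩, h, l, hl⟩
    have hl' : l.length = ℓ := hl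
    subst hl'
    rfl

noncomputable instance [Fintype D] : Fintype (WB D m) := Fintype.ofEquiv _ (wEquiv D m).symm

lemma card_WB (D : Type*) [Fintype D] (m : ℕ) :
    Nat.card (WB D m) = ∑ ℓ ∈ range m, Fintype.card D ^ (ℓ + 1) := by
  rw [Nat.card_congr (wEquiv D m), Nat.card_eq_fintype_card, Fintype.card_sigma]
  rw [← Fin.sum_univ_eq_sum_range (fun ℓ => Fintype.card D ^ (ℓ + 1)) m]
  refine Finset.sum_congr rfl fun ℓ _ => ?_
  rw [Fintype.card_prod, card_vector, pow_succ']

/-! ### fixed words -/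

lemma list_map_eq_self_iff (f : D → D) (l : List D) : l.map f = l ↔ ∀ a ∈ l, f a = a := by
  induction l with
  | nil => simp
  | cons a t ih => simp [ih]

lemma wmap_fixed_iff (σ : D → D) (w : WB D m) :
    wmap m σ w = w ↔ σ w.1.head = w.1.head ∧ ∀ a ∈ w.1.tail, σ a = a := by
  obtain ⟨⟨h, t⟩, hw⟩ := w
  rw [Subtype.ext_iff]
  show FreeSemigroup.map σ ⟨h, t⟩ = _ ↔ _
  rw [fs_map_mk, FreeSemigroup.mk.injEq, list_map_eq_self_iff]

def fixEquiv (m : ℕ) (σ : D → D) :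
    {w : WB D m // wmap m σ w = w} ≃ WB {d : D // σ d = d} m where
  toFun w := ⟨⟨⟨w.1.1.head, ((wmap_fixed_iff σ w.1).mp w.2).1⟩,
      w.1.1.tail.attach.map (fun a => ⟨a.1, ((wmap_fixed_iff σ w.1).mp w.2).2 a.1 a.2⟩)⟩, by
    have := w.1.2
    unfold FreeSemigroup.length at *
    simpa using this⟩
  invFun w := ⟨⟨⟨w.1.head.1, w.1.tail.map Subtype.val⟩, by
      have := w.2
      unfold FreeSemigroup.length at *
      simpa using this⟩, by
    rw [wmap_fixed_iff]
    constructor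
    · exact w.1.head.2
    · intro a ha
      simp only [List.mem_map] at ha
      obtain ⟨b, _, rfl⟩ := ha
      exact b.2⟩
  left_inv w := by
    apply Subtype.ext
    apply Subtype.ext
    show FreeSemigroup.mk _ _ = _
    congr 1
    rw [List.map_map]
    simp
  right_inv w := by
    apply Subtype.ext
    apply FreeSemigroup.ext
    · exact Subtype.ext rfl
    · apply List.map_injective_iff.mpr Subtype.coe_injective
      rw [List.map_map]
      simp

lemma card_fix (D : Type*) [Fintype D] (m : ℕ) (σ : Perm D) [DecidablePred fun d : D => σ d = d] :
    Nat.card {w : WB D m // wmap m (⇑σ) w = w}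
      = ∑ ℓ ∈ range m, Fintype.card {d : D // σ d = d} ^ (ℓ + 1) := by
  rw [Nat.card_congr (fixEquiv m (⇑σ)), card_WB]

/-! ### the action -/

def XS (D : Type*) (m : ℕ) := D → WB D m

instance : MulAction (Perm D) (XS D m) where
  smul g f := fun d => wmap m g (f (g.symm d))
  one_smul f := funext fun d => by
    show wmap m (1 : Perm D) (f _) = f d
    have h1 : ((1 : Perm D) : D → D) = id := rfl
    rw [h1, wmap_id]; rfl
  mul_smul g h f := funext fun d => by
    show wmap m (g * h : Perm D) (f _) = wmap m g (wmap m h (f _))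
    rw [wmap_wmap]
    rfl

lemma smul_apply (g : Perm D) (f : XS D m) (d : D) :
    (g • f) d = wmap m g (f (g⁻¹ d)) := rfl

instance [Finite D] : Finite (XS D m) := by
  unfold XS
  have : Finite (FreeSemigroup D → Prop) → True := fun _ => trivial
  cases nonempty_fintype D
  infer_instance

lemma mem_fixedBy_iff (g : Perm D) (f : XS D m) :
    f ∈ fixedBy (XS D m) g ↔ ∀ d, f (g d) = wmap m (⇑g) (f d) := by
  constructor
  · intro hf d
    have h2 := congr_fun (hf : g • f = f) (g d)
    rw [smul_apply] at h2
    rw [Perm.inv_def, Equiv.symm_apply_apply] at h2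
    exact h2.symm
  · intro h
    show g • f = f
    funext d
    rw [smul_apply, ← h (g⁻¹ d)]
    simp

lemma card_fixedBy_conj {G α : Type*} [Group G] [MulAction G α] (k g : G) :
    Nat.card (fixedBy α (k * g * k⁻¹)) = Nat.card (fixedBy α g) := by
  rw [← smul_fixedBy α g k, ← Set.image_smul]
  exact (Nat.card_congr (Equiv.Set.image _ _ (MulAction.injective k))).symm

/-! ### transferring along an equiv of alphabets -/

def xsCongr (m : ℕ) (e : D ≃ E) : XS D m ≃ XS E m where
  toFun f := fun x => wmap m e (f (e.symm x))
  invFun f := fun d => wmap m e.symm (f (e d))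
  left_inv f := funext fun d => by
    show wmap m (⇑e.symm) (wmap m (⇑e) (f (e.symm (e d)))) = f d
    rw [wmap_wmap, e.symm_apply_apply]
    have h1 : (⇑e.symm ∘ ⇑e : D → D) = id := by funext x; simp
    rw [h1, wmap_id]
  right_inv f := funext fun x => by
    show wmap m (⇑e) (wmap m (⇑e.symm) (f (e (e.symm x)))) = f x
    rw [wmap_wmap, e.apply_symm_apply]
    have h1 : (⇑e ∘ ⇑e.symm : E → E) = id := by funext x; simp
    rw [h1, wmap_id]

lemma xsCongr_smul (e : D ≃ E) (g : Perm D) (f : XS D m) :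
    xsCongr m e (g • f) = (e.permCongr g) • (xsCongr m e f) := by
  funext x
  show wmap m (⇑e) ((g • f) (e.symm x)) = wmap m (⇑(e.permCongr g)) ((xsCongr m e f) _)
  rw [smul_apply]
  show wmap m (⇑e) (wmap m (⇑g) (f (g⁻¹ (e.symm x))))
      = wmap m (⇑(e.permCongr g)) (wmap m (⇑e) (f (e.symm ((e.permCongr g)⁻¹ x))))
  rw [wmap_wmap, wmap_wmap]
  have h1 : (⇑(e.permCongr g) ∘ ⇑e : D → E) = ⇑e ∘ ⇑g := by funext d; simp
  have h2 : e.symm ((e.permCongr g)⁻¹ x) = g⁻¹ (e.symm x) := by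
    have : (e.permCongr g)⁻¹ = e.permCongr g⁻¹ := by
      apply Equiv.ext; intro y
      rw [Equiv.Perm.inv_def, Equiv.symm_apply_eq]
      simp
    rw [this]
    simp
  rw [h1, h2]

/-- transfer an orbit quotient along an intertwining equiv -/
def quotOrbitCongr {G H α β : Type*} [Group G] [Group H] [MulAction G α] [MulAction H β]
    (θ : G → H) (hθ : Function.Surjective θ) (e : α ≃ β)
    (hc : ∀ g a, e (g • a) = θ g • e a) :
    Quotient (orbitRel G α) ≃ Quotient (orbitRel H β) :=
  Quot.congr e (fun a b => by
    rw [orbitRel_apply, orbitRel_apply, mem_orbit_iff, mem_orbit_iff]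
    constructor
    · rintro ⟨g, rfl⟩
      exact ⟨θ g, (hc g b).symm⟩
    · rintro ⟨h, hh⟩
      obtain ⟨g, rfl⟩ := hθ h
      exact ⟨g, e.injective (by rw [hc g b, hh])⟩)

/-! ### homs to functions -/

def homEquiv (D : Type*) (m : ℕ) :
    {φ : FreeSemigroup D →ₙ* FreeSemigroup D // ∀ d : D, (φ (FreeSemigroup.of d)).length ≤ m}
      ≃ XS D m where
  toFun φ := fun d => ⟨φ.1 (of d), φ.2 d⟩
  invFun f := ⟨FreeSemigroup.lift (fun d => (f d).1), fun d => by
    rw [lift_of]; exact (f d).2⟩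
  left_inv φ := Subtype.ext (hom_ext (funext fun d => by simp))
  right_inv f := funext fun d => Subtype.ext (by simp)

lemma hom_rel_iff (m : ℕ)
    (φ ψ : {φ : FreeSemigroup D →ₙ* FreeSemigroup D //
        ∀ d : D, (φ (FreeSemigroup.of d)).length ≤ m}) :
    (∃ g : Equiv.Perm D,
        (ψ : FreeSemigroup D →ₙ* FreeSemigroup D).comp (FreeSemigroup.map ⇑g)
          = (FreeSemigroup.map ⇑g).comp (φ : FreeSemigroup D →ₙ* FreeSemigroup D))
      ↔ orbitRel (Perm D) (XS D m) (homEquiv D m φ) (homEquiv D m ψ) := by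
  rw [orbitRel_apply, mem_orbit_iff]
  constructor
  · rintro ⟨g, hg⟩
    refine ⟨g⁻¹, ?_⟩
    funext d
    rw [smul_apply]
    apply Subtype.ext
    show FreeSemigroup.map (⇑g⁻¹) (ψ.1 (of ((g⁻¹)⁻¹ d))) = φ.1 (of d)
    have h2 : ((g⁻¹)⁻¹ : Perm D) d = g d := by rw [inv_inv]
    rw [h2]
    have h4 : ψ.1 (FreeSemigroup.map (⇑g) (of d))
        = FreeSemigroup.map (⇑g) (φ.1 (of d)) := DFunLike.congr_fun hg (of d)
    rw [map_of] at h4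
    rw [h4, fs_map_map]
    have h5 : (⇑g⁻¹ ∘ ⇑g : D → D) = id := by funext x; simp
    rw [h5, fs_map_id]
  · rintro ⟨x, hx⟩
    refine ⟨x⁻¹, hom_ext (funext fun d => ?_)⟩
    have h2 := congr_fun hx d
    rw [smul_apply] at h2
    have h3 : FreeSemigroup.map (⇑x) (ψ.1 (of (x⁻¹ d))) = φ.1 (of d) :=
      congrArg Subtype.val h2
    show ψ.1 (FreeSemigroup.map (⇑x⁻¹) (of d)) = FreeSemigroup.map (⇑x⁻¹) (φ.1 (of d))
    rw [map_of, ← h3, fs_map_map]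
    have h6 : (⇑x⁻¹ ∘ ⇑x : D → D) = id := by funext y; simp
    rw [h6, fs_map_id]

/-! ### representatives in S4 -/

def r2 : Perm (Fin 4) := Equiv.swap 0 1
def r3 : Perm (Fin 4) := Equiv.swap 0 1 * Equiv.swap 2 3
def r4 : Perm (Fin 4) := Equiv.swap 0 1 * Equiv.swap 1 2
def r5 : Perm (Fin 4) := Equiv.swap 0 1 * Equiv.swap 1 2 * Equiv.swap 2 3

def E2 (m : ℕ) : ↥(fixedBy (XS (Fin 4) m) r2) ≃
    WB (Fin 4) m × {w : WB (Fin 4) m // wmap m (⇑r2) w = w}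
      × {w : WB (Fin 4) m // wmap m (⇑r2) w = w} where
  toFun f :=
    ⟨f.1 0,
     ⟨f.1 2, by have h := (mem_fixedBy_iff r2 f.1).mp f.2 2
                have h2 : r2 2 = 2 := by decide
                rw [h2] at h; exact h.symm⟩,
     ⟨f.1 3, by have h := (mem_fixedBy_iff r2 f.1).mp f.2 3
                have h2 : r2 3 = 3 := by decide
                rw [h2] at h; exact h.symm⟩⟩
  invFun x := ⟨![x.1, wmap m (⇑r2) x.1, x.2.1.1, x.2.2.1], by
    apply (mem_fixedBy_iff _ _).mpr
    have hsq : (⇑r2 ∘ ⇑r2 : Fin 4 → Fin 4) = id := by decide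
    intro d
    fin_cases d
    · show (![x.1, wmap m (⇑r2) x.1, x.2.1.1, x.2.2.1] : _) (r2 0) = _
      have h2 : r2 0 = 1 := by decide
      rw [h2]; rfl
    · show (![x.1, wmap m (⇑r2) x.1, x.2.1.1, x.2.2.1] : _) (r2 1) = _
      have h2 : r2 1 = 0 := by decide
      rw [h2]
      show x.1 = wmap m (⇑r2) (wmap m (⇑r2) x.1)
      rw [wmap_invol hsq]
    · show (![x.1, wmap m (⇑r2) x.1, x.2.1.1, x.2.2.1] : _) (r2 2) = _
      have h2 : r2 2 = 2 := by decide
      rw [h2]; exact x.2.1.2.symm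
    · show (![x.1, wmap m (⇑r2) x.1, x.2.1.1, x.2.2.1] : _) (r2 3) = _
      have h2 : r2 3 = 3 := by decide
      rw [h2]; exact x.2.2.2.symm⟩
  left_inv f := by
    apply Subtype.ext
    funext d
    have h := (mem_fixedBy_iff r2 f.1).mp f.2
    fin_cases d
    · rfl
    · show wmap m (⇑r2) (f.1 0) = f.1 1
      have h0 := h 0
      have h2 : r2 0 = 1 := by decide
      rw [h2] at h0
      exact h0.symm
    · rfl
    · rfl
  right_inv x := rfl

def E3 (m : ℕ) : ↥(fixedBy (XS (Fin 4) m) r3) ≃ WB (Fin 4) m × WB (Fin 4) m where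
  toFun f := ⟨f.1 0, f.1 2⟩
  invFun x := ⟨![x.1, wmap m (⇑r3) x.1, x.2, wmap m (⇑r3) x.2], by
    apply (mem_fixedBy_iff _ _).mpr
    have hsq : (⇑r3 ∘ ⇑r3 : Fin 4 → Fin 4) = id := by decide
    intro d
    fin_cases d
    · show (![x.1, wmap m (⇑r3) x.1, x.2, wmap m (⇑r3) x.2] : _) (r3 0) = _
      have h2 : r3 0 = 1 := by decide
      rw [h2]; rfl
    · show (![x.1, wmap m (⇑r3) x.1, x.2, wmap m (⇑r3) x.2] : _) (r3 1) = _
      have h2 : r3 1 = 0 := by decide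
      rw [h2]
      show x.1 = wmap m (⇑r3) (wmap m (⇑r3) x.1)
      rw [wmap_invol hsq]
    · show (![x.1, wmap m (⇑r3) x.1, x.2, wmap m (⇑r3) x.2] : _) (r3 2) = _
      have h2 : r3 2 = 3 := by decide
      rw [h2]; rfl
    · show (![x.1, wmap m (⇑r3) x.1, x.2, wmap m (⇑r3) x.2] : _) (r3 3) = _
      have h2 : r3 3 = 2 := by decide
      rw [h2]
      show x.2 = wmap m (⇑r3) (wmap m (⇑r3) x.2)
      rw [wmap_invol hsq]⟩
  left_inv f := by
    apply Subtype.ext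
    funext d
    have h := (mem_fixedBy_iff r3 f.1).mp f.2
    fin_cases d
    · rfl
    · show wmap m (⇑r3) (f.1 0) = f.1 1
      have h0 := h 0
      have h2 : r3 0 = 1 := by decide
      rw [h2] at h0
      exact h0.symm
    · rfl
    · show wmap m (⇑r3) (f.1 2) = f.1 3
      have h0 := h 2
      have h2 : r3 2 = 3 := by decide
      rw [h2] at h0
      exact h0.symm
  right_inv x := rfl

def E4 (m : ℕ) : ↥(fixedBy (XS (Fin 4) m) r4) ≃
    WB (Fin 4) m × {w : WB (Fin 4) m // wmap m (⇑r4) w = w} where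
  toFun f :=
    ⟨f.1 0,
     ⟨f.1 3, by have h := (mem_fixedBy_iff r4 f.1).mp f.2 3
                have h2 : r4 3 = 3 := by decide
                rw [h2] at h; exact h.symm⟩⟩
  invFun x := ⟨![x.1, wmap m (⇑r4) x.1, wmap m (⇑r4) (wmap m (⇑r4) x.1), x.2.1], by
    apply (mem_fixedBy_iff _ _).mpr
    intro d
    fin_cases d
    · show (![x.1, wmap m (⇑r4) x.1, wmap m (⇑r4) (wmap m (⇑r4) x.1), x.2.1] : _) (r4 0) = _
      have h2 : r4 0 = 1 := by decide
      rw [h2]; rfl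
    · show (![x.1, wmap m (⇑r4) x.1, wmap m (⇑r4) (wmap m (⇑r4) x.1), x.2.1] : _) (r4 1) = _
      have h2 : r4 1 = 2 := by decide
      rw [h2]; rfl
    · show (![x.1, wmap m (⇑r4) x.1, wmap m (⇑r4) (wmap m (⇑r4) x.1), x.2.1] : _) (r4 2) = _
      have h2 : r4 2 = 0 := by decide
      rw [h2]
      show x.1 = wmap m (⇑r4) (wmap m (⇑r4) (wmap m (⇑r4) x.1))
      rw [wmap_wmap, wmap_wmap]
      have h3 : ((⇑r4 ∘ ⇑r4) ∘ ⇑r4 : Fin 4 → Fin 4) = id := by decide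
      rw [h3, wmap_id]
    · show (![x.1, wmap m (⇑r4) x.1, wmap m (⇑r4) (wmap m (⇑r4) x.1), x.2.1] : _) (r4 3) = _
      have h2 : r4 3 = 3 := by decide
      rw [h2]; exact x.2.2.symm⟩
  left_inv f := by
    apply Subtype.ext
    funext d
    have h := (mem_fixedBy_iff r4 f.1).mp f.2
    have h0 := h 0
    have e0 : r4 0 = 1 := by decide
    rw [e0] at h0
    fin_cases d
    · rfl
    · exact h0.symm
    · show wmap m (⇑r4) (wmap m (⇑r4) (f.1 0)) = f.1 2
      have h1 := h 1
      have e1 : r4 1 = 2 := by decide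
      rw [e1] at h1
      rw [← h0, ← h1]
    · rfl
  right_inv x := rfl

def E5 (m : ℕ) : ↥(fixedBy (XS (Fin 4) m) r5) ≃ WB (Fin 4) m where
  toFun f := f.1 0
  invFun w := ⟨![w, wmap m (⇑r5) w, wmap m (⇑r5) (wmap m (⇑r5) w),
      wmap m (⇑r5) (wmap m (⇑r5) (wmap m (⇑r5) w))], by
    apply (mem_fixedBy_iff _ _).mpr
    intro d
    fin_cases d
    · show (![w, wmap m (⇑r5) w, wmap m (⇑r5) (wmap m (⇑r5) w),
        wmap m (⇑r5) (wmap m (⇑r5) (wmap m (⇑r5) w))] : _) (r5 0) = _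
      have h2 : r5 0 = 1 := by decide
      rw [h2]; rfl
    · show (![w, wmap m (⇑r5) w, wmap m (⇑r5) (wmap m (⇑r5) w),
        wmap m (⇑r5) (wmap m (⇑r5) (wmap m (⇑r5) w))] : _) (r5 1) = _
      have h2 : r5 1 = 2 := by decide
      rw [h2]; rfl
    · show (![w, wmap m (⇑r5) w, wmap m (⇑r5) (wmap m (⇑r5) w),
        wmap m (⇑r5) (wmap m (⇑r5) (wmap m (⇑r5) w))] : _) (r5 2) = _
      have h2 : r5 2 = 3 := by decide
      rw [h2]; rfl
    · show (![w, wmap m (⇑r5) w, wmap m (⇑r5) (wmap m (⇑r5) w),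
        wmap m (⇑r5) (wmap m (⇑r5) (wmap m (⇑r5) w))] : _) (r5 3) = _
      have h2 : r5 3 = 0 := by decide
      rw [h2]
      show w = wmap m (⇑r5) (wmap m (⇑r5) (wmap m (⇑r5) (wmap m (⇑r5) w)))
      rw [wmap_wmap, wmap_wmap, wmap_wmap]
      have h3 : (((⇑r5 ∘ ⇑r5) ∘ ⇑r5) ∘ ⇑r5 : Fin 4 → Fin 4) = id := by decide
      rw [h3, wmap_id]⟩
  left_inv f := by
    apply Subtype.ext
    funext d
    have h := (mem_fixedBy_iff r5 f.1).mp f.2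
    have h0 := h 0
    have e0 : r5 0 = 1 := by decide
    rw [e0] at h0
    have h1 := h 1
    have e1 : r5 1 = 2 := by decide
    rw [e1] at h1
    have h2 := h 2
    have e2 : r5 2 = 3 := by decide
    rw [e2] at h2
    fin_cases d
    · rfl
    · exact h0.symm
    · show wmap m (⇑r5) (wmap m (⇑r5) (f.1 0)) = f.1 2
      rw [← h0, ← h1]
    · show wmap m (⇑r5) (wmap m (⇑r5) (wmap m (⇑r5) (f.1 0))) = f.1 3
      rw [← h0, ← h1, ← h2]
  right_inv w := rfl

/-! ### conjugacy classification -/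

def pcnt (g : Perm (Fin 4)) : ℕ := (Finset.univ.filter (fun d => g d = d)).card

def pidx (g : Perm (Fin 4)) : Fin 5 :=
  if g = 1 then 0 else if g * g = 1 then (if pcnt g = 2 then 1 else 2)
  else if pcnt g = 1 then 3 else 4

def prep : Fin 5 → Perm (Fin 4) := ![1, r2, r3, r4, r5]

lemma prep_conj : ∀ g : Perm (Fin 4), ∃ k : Perm (Fin 4), g = k * prep (pidx g) * k⁻¹ := by
  decide

lemma pidx_card0 : (Finset.univ.filter (fun g : Perm (Fin 4) => pidx g = 0)).card = 1 := by decide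
lemma pidx_card1 : (Finset.univ.filter (fun g : Perm (Fin 4) => pidx g = 1)).card = 6 := by decide
lemma pidx_card2 : (Finset.univ.filter (fun g : Perm (Fin 4) => pidx g = 2)).card = 3 := by decide
lemma pidx_card3 : (Finset.univ.filter (fun g : Perm (Fin 4) => pidx g = 3)).card = 8 := by decide
lemma pidx_card4 : (Finset.univ.filter (fun g : Perm (Fin 4) => pidx g = 4)).card = 6 := by decide


lemma card_quot (D : Type*) [Fintype D] (m : ℕ) (hcard : Fintype.card D = 4) :
    24 * Nat.card (Quot (fun φ ψ : {φ : FreeSemigroup D →ₙ* FreeSemigroup D //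
          ∀ d : D, (φ (FreeSemigroup.of d)).length ≤ m} =>
        ∃ g : Equiv.Perm D,
          (ψ : FreeSemigroup D →ₙ* FreeSemigroup D).comp (FreeSemigroup.map ⇑g)
            = (FreeSemigroup.map ⇑g).comp
                (φ : FreeSemigroup D →ₙ* FreeSemigroup D)))
      = (Nat.card (WB (Fin 4) m))^4
        + 6 * (Nat.card (WB (Fin 4) m)
            * (Nat.card {w : WB (Fin 4) m // wmap m (⇑r2) w = w}
               * Nat.card {w : WB (Fin 4) m // wmap m (⇑r2) w = w}))
        + 3 * (Nat.card (WB (Fin 4) m) * Nat.card (WB (Fin 4) m))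
        + 8 * (Nat.card (WB (Fin 4) m) * Nat.card {w : WB (Fin 4) m // wmap m (⇑r4) w = w})
        + 6 * Nat.card (WB (Fin 4) m) := by
  obtain ⟨e⟩ : Nonempty (D ≃ Fin 4) := ⟨Fintype.equivFinOfCardEq hcard⟩
  set A := Nat.card (WB (Fin 4) m) with hA
  set B := Nat.card {w : WB (Fin 4) m // wmap m (⇑r2) w = w} with hB
  set M := Nat.card {w : WB (Fin 4) m // wmap m (⇑r4) w = w} with hM
  have e1 : Quot (fun φ ψ : {φ : FreeSemigroup D →ₙ* FreeSemigroup D //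
          ∀ d : D, (φ (FreeSemigroup.of d)).length ≤ m} =>
        ∃ g : Equiv.Perm D,
          (ψ : FreeSemigroup D →ₙ* FreeSemigroup D).comp (FreeSemigroup.map ⇑g)
            = (FreeSemigroup.map ⇑g).comp
                (φ : FreeSemigroup D →ₙ* FreeSemigroup D))
      ≃ Quotient (orbitRel (Perm D) (XS D m)) :=
    Quot.congr (homEquiv D m) (fun a b => hom_rel_iff m a b)
  have e2 : Quotient (orbitRel (Perm D) (XS D m))
      ≃ Quotient (orbitRel (Perm (Fin 4)) (XS (Fin 4) m)) :=
    quotOrbitCongr (⇑e.permCongr) e.permCongr.surjective (xsCongr m e)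
      (fun g a => xsCongr_smul e g a)
  haveI : Fintype (Quotient (orbitRel (Perm (Fin 4)) (XS (Fin 4) m))) := Fintype.ofFinite _
  haveI : ∀ g : Perm (Fin 4), Fintype (fixedBy (XS (Fin 4) m) g) := fun g => Fintype.ofFinite _
  have burn := MulAction.sum_card_fixedBy_eq_card_orbits_mul_card_group
    (Perm (Fin 4)) (XS (Fin 4) m)
  have hfix : ∀ i : Fin 5, Nat.card (fixedBy (XS (Fin 4) m) (prep i))
      = (![A^4, A * (B * B), A * A, A * M, A] : Fin 5 → ℕ) i := by
    intro i
    fin_cases i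
    · show Nat.card (fixedBy (XS (Fin 4) m) 1) = A^4
      rw [fixedBy_one_eq_univ]
      rw [Nat.card_congr (Equiv.Set.univ _)]
      have h1 : Nat.card (XS (Fin 4) m) = Nat.card (Fin 4 → WB (Fin 4) m) := rfl
      rw [h1, Nat.card_fun]
      simp [hA]
    · show Nat.card (fixedBy (XS (Fin 4) m) r2) = A * (B * B)
      rw [Nat.card_congr (E2 m), Nat.card_prod, Nat.card_prod]
    · show Nat.card (fixedBy (XS (Fin 4) m) r3) = A * A
      rw [Nat.card_congr (E3 m), Nat.card_prod]
    · show Nat.card (fixedBy (XS (Fin 4) m) r4) = A * M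
      rw [Nat.card_congr (E4 m), Nat.card_prod]
    · show Nat.card (fixedBy (XS (Fin 4) m) r5) = A
      rw [Nat.card_congr (E5 m)]
  have hfixg : ∀ g : Perm (Fin 4), Fintype.card (fixedBy (XS (Fin 4) m) g)
      = (![A^4, A * (B * B), A * A, A * M, A] : Fin 5 → ℕ) (pidx g) := by
    intro g
    rw [← Nat.card_eq_fintype_card]
    obtain ⟨k, hk⟩ := prep_conj g
    conv_lhs => rw [hk]
    rw [card_fixedBy_conj]
    exact hfix (pidx g)
  have hsum : ∑ g : Perm (Fin 4), Fintype.card (fixedBy (XS (Fin 4) m) g)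
      = A^4 + 6 * (A * (B * B)) + 3 * (A * A) + 8 * (A * M) + 6 * A := by
    rw [Finset.sum_congr rfl (fun g _ => hfixg g)]
    rw [← Finset.sum_fiberwise_of_maps_to (fun (g : Perm (Fin 4)) _ => Finset.mem_univ (pidx g))
      (fun g => (![A^4, A * (B * B), A * A, A * M, A] : Fin 5 → ℕ) (pidx g))]
    have hstep : ∀ i : Fin 5,
        ∑ g ∈ Finset.univ.filter (fun g : Perm (Fin 4) => pidx g = i),
          (![A^4, A * (B * B), A * A, A * M, A] : Fin 5 → ℕ) (pidx g)
        = (Finset.univ.filter (fun g : Perm (Fin 4) => pidx g = i)).card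
            * (![A^4, A * (B * B), A * A, A * M, A] : Fin 5 → ℕ) i := by
      intro i
      apply Finset.sum_const_nat
      intro g hg
      rw [(Finset.mem_filter.mp hg).2]
    rw [Fin.sum_univ_five]
    rw [hstep 0, hstep 1, hstep 2, hstep 3, hstep 4,
      pidx_card0, pidx_card1, pidx_card2, pidx_card3, pidx_card4]
    show 1 * A^4 + 6 * (A * (B * B)) + 3 * (A * A) + 8 * (A * M) + 6 * A = _
    ring
  have hperm : Fintype.card (Perm (Fin 4)) = 24 := by
    rw [Fintype.card_perm]
    decide
  rw [hsum, hperm] at burn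
  rw [Nat.card_congr (e1.trans e2), Nat.card_eq_fintype_card]
  omega


lemma geom_help (x : ℚ) (hx : x ≠ 1) (m : ℕ) :
    ∑ ℓ ∈ range m, x^(ℓ+1) = (x^(m+1) - x)/(x-1) := by
  have h := geom_sum_eq hx m
  have hx0 : x - 1 ≠ 0 := sub_ne_zero.mpr hx
  calc ∑ ℓ ∈ range m, x^(ℓ+1) = ∑ ℓ ∈ range m, x^ℓ * x := by
        refine Finset.sum_congr rfl fun ℓ _ => ?_
        rw [pow_succ]
    _ = (∑ ℓ ∈ range m, x^ℓ) * x := by rw [Finset.sum_mul]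
    _ = (x^m - 1)/(x-1) * x := by rw [h]
    _ = (x^(m+1) - x)/(x-1) := by rw [pow_succ]; field_simp

lemma hAq (m : ℕ) : ((Nat.card (WB (Fin 4) m) : ℚ)) = ((4:ℚ)^(m+1) - 4)/3 := by
  rw [card_WB]
  push_cast
  simp only [Fintype.card_fin]
  rw [show ∑ ℓ ∈ range m, ((4:ℕ):ℚ)^(ℓ+1) = ∑ ℓ ∈ range m, (4:ℚ)^(ℓ+1) by norm_num]
  rw [geom_help 4 (by norm_num) m]
  norm_num

lemma hBq (m : ℕ) :
    ((Nat.card {w : WB (Fin 4) m // wmap m (⇑r2) w = w} : ℚ)) = (2:ℚ)^(m+1) - 2 := by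
  rw [card_fix (Fin 4) m r2]
  have hc : Fintype.card {d : Fin 4 // r2 d = d} = 2 := by decide
  rw [hc]
  push_cast
  rw [geom_help 2 (by norm_num) m]
  norm_num

lemma hMq (m : ℕ) :
    ((Nat.card {w : WB (Fin 4) m // wmap m (⇑r4) w = w} : ℚ)) = (m : ℚ) := by
  rw [card_fix (Fin 4) m r4]
  have hc : Fintype.card {d : Fin 4 // r4 d = d} = 1 := by decide
  rw [hc]
  simp

end MEndoProof

/-- If `|D| = 4` and `m ≥ 1`, then with `A = (4^{m+1}−4)/3` and `B = 2^{m+1}−2`, the number of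
`m`-endomorphisms on the free semigroup `D⁺`, up to combinatorial equivalence, is
`(1/24)·(A⁴ + 6·B²·A + 3·A² + 8m·A + 6·A)`. -/
theorem number_of_classes_of_m_endomorphisms_card_four
    {D : Type*} [Fintype D] {m : ℕ} (hm : 1 ≤ m) (hcard : Fintype.card D = 4) :
    (Nat.card (Quot (fun φ ψ : {φ : FreeSemigroup D →ₙ* FreeSemigroup D //
          ∀ d : D, (φ (FreeSemigroup.of d)).length ≤ m} =>
        ∃ g : Equiv.Perm D,
          (ψ : FreeSemigroup D →ₙ* FreeSemigroup D).comp (FreeSemigroup.map ⇑g)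
            = (FreeSemigroup.map ⇑g).comp
                (φ : FreeSemigroup D →ₙ* FreeSemigroup D))) : ℚ)
      = (1 / 24) * ((((4 : ℚ) ^ (m + 1) - 4) / 3) ^ 4
          + 6 * ((2 : ℚ) ^ (m + 1) - 2) ^ 2 * (((4 : ℚ) ^ (m + 1) - 4) / 3)
          + 3 * (((4 : ℚ) ^ (m + 1) - 4) / 3) ^ 2
          + 8 * m * (((4 : ℚ) ^ (m + 1) - 4) / 3)
          + 6 * (((4 : ℚ) ^ (m + 1) - 4) / 3)) := by
  have key := MEndoProof.card_quot D m hcard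
  have keyq := congrArg (fun n : ℕ => (n : ℚ)) key
  push_cast at keyq
  rw [← MEndoProof.hAq m, ← MEndoProof.hBq m, ← MEndoProof.hMq m]
  linear_combination (1/24 : ℚ) * keyq
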